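/- Constant-coefficient equivariance error bound for the regular nonlinearity: for every δ with 0 ≤ δ ≤ 1, | (1/N) Σ_{t=0}^{N−1} y(t + δ) − (1/N) Σ_{t=0}^{N−1} y(t) | ≤ (2π L_f / N) · ‖∂x‖₁. -/

import Mathlib

open Finset Real

lemma abs_sin_sub_sin_le' (a b : ℝ) : |Real.sin a - Real.sin b| ≤ |a - b| := by
  rw [Real.sin_sub_sin]
  calc |2 * Real.sin ((a - b) / 2) * Real.cos ((a + b) / 2)|
      = 2 * |Real.sin ((a - b) / 2)| * |Real.cos ((a + b) / 2)| := by
        rw [abs_mul, abs_mul, abs_two]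
    _ ≤ 2 * |(a - b) / 2| * 1 :=
        mul_le_mul (mul_le_mul_of_nonneg_left Real.abs_sin_le_abs two_pos.le) (Real.abs_cos_le_one _)
          (abs_nonneg _) (by positivity)
    _ = |a - b| := by rw [abs_div, abs_two]; ring

lemma abs_cos_sub_cos_le' (a b : ℝ) : |Real.cos a - Real.cos b| ≤ |a - b| := by
  rw [Real.cos_sub_cos]
  calc |-2 * Real.sin ((a + b) / 2) * Real.sin ((a - b) / 2)|
      = 2 * |Real.sin ((a - b) / 2)| * |Real.sin ((a + b) / 2)| := by
        rw [abs_mul, abs_mul, abs_neg, abs_two]; ring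
    _ ≤ 2 * |(a - b) / 2| * 1 :=
        mul_le_mul (mul_le_mul_of_nonneg_left Real.abs_sin_le_abs two_pos.le) (Real.abs_sin_le_one _)
          (abs_nonneg _) (by positivity)
    _ = |a - b| := by rw [abs_div, abs_two]; ring

/-- constant-coefficient equivariance error bound for the
regular nonlinearity. -/
theorem constant_coefficient_equivariance_error_bound
    (N B : ℕ) (hN : 1 ≤ N) (hB : 1 ≤ B)
    (x0 : ℝ) (xa xb : ℕ → ℝ) (x : ℝ → ℝ)
    (hx : ∀ t : ℝ, x t = x0 + ∑ m ∈ Finset.Icc 1 B,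
      (xa m * Real.cos (2 * Real.pi * m * t / N)
        + xb m * Real.sin (2 * Real.pi * m * t / N)))
    (f : ℝ → ℝ) (Lf : ℝ) (hLf : 0 ≤ Lf)
    (hf : ∀ a b : ℝ, |f a - f b| ≤ Lf * |a - b|)
    (y : ℝ → ℝ) (hy : ∀ t : ℝ, y t = f (x t)) :
    ∀ (δ : ℝ), 0 ≤ δ → δ ≤ 1 →
      |(1 / (N : ℝ)) * (∑ t ∈ Finset.range N, y ((t : ℝ) + δ))
        - (1 / (N : ℝ)) * (∑ t ∈ Finset.range N, y (t : ℝ))|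
      ≤ (2 * Real.pi * Lf / N) *
          ∑ k ∈ Finset.Icc 1 B, (k : ℝ) * (|xa k| + |xb k|) := by
  intro δ hδ0 hδ1
  have hNpos : (0:ℝ) < N := by exact_mod_cast hN
  set S := ∑ k ∈ Finset.Icc 1 B, (k : ℝ) * (|xa k| + |xb k|) with hS
  have key : ∀ t : ℝ, |y (t + δ) - y t| ≤ Lf * ((2 * Real.pi / N) * S) := by
    intro t
    rw [hy, hy]
    refine (hf _ _).trans ?_
    refine mul_le_mul_of_nonneg_left ?_ hLf
    have hx' : x (t + δ) - x t = ∑ m ∈ Finset.Icc 1 B,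
        (xa m * (Real.cos (2*Real.pi*m*(t+δ)/N) - Real.cos (2*Real.pi*m*t/N))
         + xb m * (Real.sin (2*Real.pi*m*(t+δ)/N) - Real.sin (2*Real.pi*m*t/N))) := by
      rw [hx, hx, add_sub_add_left_eq_sub, ← Finset.sum_sub_distrib]
      exact Finset.sum_congr rfl (fun m _ => by ring)
    rw [hx']
    refine (Finset.abs_sum_le_sum_abs _ _).trans ?_
    rw [hS, Finset.mul_sum]
    refine Finset.sum_le_sum (fun m hm => ?_)
    have hdiff : 2*Real.pi*m*(t+δ)/N - 2*Real.pi*m*t/N = 2*Real.pi*m*δ/N := by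
      field_simp; ring
    have hnn : 0 ≤ 2*Real.pi*(m:ℝ)*δ/N :=
      div_nonneg (mul_nonneg (by positivity) hδ0) hNpos.le
    have hbound : |2*Real.pi*m*(t+δ)/N - 2*Real.pi*m*t/N| ≤ 2*Real.pi*m/N := by
      rw [hdiff, abs_of_nonneg hnn]
      calc 2*Real.pi*(m:ℝ)*δ/N ≤ 2*Real.pi*(m:ℝ)*1/N := by gcongr
        _ = 2*Real.pi*(m:ℝ)/N := by ring
    have h1 := (abs_cos_sub_cos_le' (2*Real.pi*m*(t+δ)/N) (2*Real.pi*m*t/N)).trans hbound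
    have h2 := (abs_sin_sub_sin_le' (2*Real.pi*m*(t+δ)/N) (2*Real.pi*m*t/N)).trans hbound
    calc |xa m * _ + xb m * _|
        ≤ |xa m| * |Real.cos (2*Real.pi*m*(t+δ)/N) - Real.cos (2*Real.pi*m*t/N)|
          + |xb m| * |Real.sin (2*Real.pi*m*(t+δ)/N) - Real.sin (2*Real.pi*m*t/N)| := by
          refine (abs_add_le _ _).trans ?_
          rw [abs_mul, abs_mul]
      _ ≤ |xa m| * (2*Real.pi*m/N) + |xb m| * (2*Real.pi*m/N) :=
          add_le_add (mul_le_mul_of_nonneg_left h1 (abs_nonneg _))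
            (mul_le_mul_of_nonneg_left h2 (abs_nonneg _))
      _ = 2*Real.pi/N * ((m:ℝ) * (|xa m| + |xb m|)) := by ring
  have hmain : |(1 / (N : ℝ)) * (∑ t ∈ Finset.range N, y ((t : ℝ) + δ))
        - (1 / (N : ℝ)) * (∑ t ∈ Finset.range N, y (t : ℝ))|
      ≤ (1 / (N:ℝ)) * ((N:ℝ) * (Lf * ((2 * Real.pi / N) * S))) := by
    rw [← mul_sub, ← Finset.sum_sub_distrib, abs_mul,
      abs_of_nonneg (by positivity : (0:ℝ) ≤ 1 / (N:ℝ))]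
    refine mul_le_mul_of_nonneg_left ?_ (by positivity)
    refine (Finset.abs_sum_le_sum_abs _ _).trans ?_
    calc ∑ t ∈ Finset.range N, |y ((t:ℝ) + δ) - y (t:ℝ)|
        ≤ ∑ _t ∈ Finset.range N, Lf * ((2 * Real.pi / N) * S) :=
          Finset.sum_le_sum (fun t _ => key t)
      _ = (N:ℝ) * (Lf * ((2 * Real.pi / N) * S)) := by
          rw [Finset.sum_const, Finset.card_range, nsmul_eq_mul]
  refine hmain.trans_eq ?_
  field_simp
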